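/- Nyquist criterion for H∞: Let ρ ∈ (0,1) and let f ∈ H∞ be such that its restriction to the annulus A_ρ is invertible in C_b(A_ρ) (equivalently, inf_{ρ<|z|<1} |f(z)| > 0). Then f is invertible in H∞ (i.e., there exists g ∈ H∞ with fg = 1 on 𝔻) if and only if W(ι(f)) = 0, i.e., if and only if for some (equivalently, every) r ∈ (ρ,1) the loop ζ ↦ f(rζ) on 𝕋 has winding number 0 about the origin. -/

import Mathlib

open Real

open Metric

/-- The open annulus `{z : ℂ | ρ < |z| < 1}`. -/
def annulus (ρ : ℝ) : Set ℂ := {z : ℂ | ρ < ‖z‖ ∧ ‖z‖ < 1}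

/-- `F` is invertible in `C_b(A_ρ)`: it is continuous and bounded on the annulus,
and `inf_{z ∈ A_ρ} |F z| > 0`. -/
def InvCb (ρ : ℝ) (F : ℂ → ℂ) : Prop :=
  ContinuousOn F (annulus ρ) ∧
  (∃ M : ℝ, ∀ z ∈ annulus ρ, ‖F z‖ ≤ M) ∧
  (∃ m > (0 : ℝ), ∀ z ∈ annulus ρ, m ≤ ‖F z‖)

/-- `WindingNumberIs f n` says the loop `ζ ↦ f ζ` on the unit circle has winding number `n`
about the origin: there is a continuous argument function `θ : [0, 2π] → ℝ` with
`f (e^{it}) = |f (e^{it})| e^{iθ(t)}` and `θ(2π) − θ(0) = 2πn`. -/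
def WindingNumberIs (f : ℂ → ℂ) (n : ℤ) : Prop :=
  ∃ θ : ℝ → ℝ, ContinuousOn θ (Set.Icc 0 (2 * π)) ∧
    (∀ t ∈ Set.Icc (0 : ℝ) (2 * π),
      f (Complex.exp (Complex.I * t)) =
        (‖f (Complex.exp (Complex.I * t))‖ : ℂ) * Complex.exp (Complex.I * θ t)) ∧
    θ (2 * π) - θ 0 = 2 * π * n



lemma winding_congr {F G : ℂ → ℂ} {n : ℤ} (h : ∀ z : ℂ, ‖z‖ = 1 → F z = G z)
    (hF : WindingNumberIs F n) : WindingNumberIs G n := by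
  obtain ⟨θ, hc, he, hd⟩ := hF
  refine ⟨θ, hc, fun t ht => ?_, hd⟩
  rw [← h _ (by simp [Complex.norm_exp])]
  exact he t ht

lemma winding_mul {F G : ℂ → ℂ} {n m : ℤ} (hF : WindingNumberIs F n) (hG : WindingNumberIs G m) :
    WindingNumberIs (fun ζ => F ζ * G ζ) (n + m) := by
  obtain ⟨θ, hc, he, hd⟩ := hF
  obtain ⟨φ, hc', he', hd'⟩ := hG
  refine ⟨θ + φ, hc.add hc', fun t ht => ?_, ?_⟩
  · simp only [Pi.add_apply]
    rw [norm_mul, Complex.ofReal_mul, Complex.ofReal_add, mul_add, Complex.exp_add]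
    conv_lhs => rw [he t ht, he' t ht]
    ring
  · simp only [Pi.add_apply]
    push_cast
    rw [show θ (2*π) + φ (2*π) - (θ 0 + φ 0) = (θ (2*π) - θ 0) + (φ (2*π) - φ 0) by ring, hd, hd']
    ring

lemma winding_one : WindingNumberIs (fun _ => 1) 0 := by
  refine ⟨fun _ => 0, continuousOn_const, fun t ht => by simp, by simp⟩

lemma winding_pow {F : ℂ → ℂ} {n : ℤ} (hF : WindingNumberIs F n) (k : ℕ) :
    WindingNumberIs (fun ζ => (F ζ) ^ k) (k * n) := by
  induction k with
  | zero => simpa using winding_one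
  | succ k ih =>
      have h2 := winding_mul ih hF
      have h3 : ((k+1 : ℕ) : ℤ) * n = ↑k * n + n := by push_cast; ring
      rw [h3]
      exact winding_congr (fun z _ => by rw [pow_succ]) h2

lemma winding_unique {F : ℂ → ℂ} {n m : ℤ}
    (h0 : ∀ t ∈ Set.Icc (0:ℝ) (2 * π), F (Complex.exp (Complex.I * t)) ≠ 0)
    (hn : WindingNumberIs F n) (hm : WindingNumberIs F m) : n = m := by
  obtain ⟨θ, hc, he, hd⟩ := hn
  obtain ⟨φ, hc', he', hd'⟩ := hm
  -- θ t - φ t ∈ 2πℤ on Icc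
  have key : ∀ t ∈ Set.Icc (0:ℝ) (2 * π), ∃ k : ℤ, θ t - φ t = 2 * π * k := by
    intro t ht
    have h1 := he t ht
    have h2 := he' t ht
    have habs : (‖F (Complex.exp (Complex.I * t))‖ : ℂ) ≠ 0 := by
      simpa using h0 t ht
    have : Complex.exp (Complex.I * θ t) = Complex.exp (Complex.I * φ t) :=
      mul_left_cancel₀ habs (h1 ▸ h2 ▸ rfl)
    rw [Complex.exp_eq_exp_iff_exists_int] at this
    obtain ⟨k, hk⟩ := this
    refine ⟨k, ?_⟩
    have : (Complex.I : ℂ) * θ t = Complex.I * φ t + k * (2 * π * Complex.I) := hk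
    have him := congrArg Complex.im this
    simp at him
    linarith
  set d : ℝ → ℝ := fun t => (θ t - φ t) / (2 * π) with hdd
  have hdc : ContinuousOn d (Set.Icc 0 (2 * π)) := (hc.sub hc').div_const _
  have hint : ∀ t ∈ Set.Icc (0:ℝ) (2 * π), ∃ k : ℤ, d t = k := by
    intro t ht
    obtain ⟨k, hk⟩ := key t ht
    refine ⟨k, ?_⟩
    simp only [hdd]
    rw [hk]
    field_simp
  have h2π : (0:ℝ) ≤ 2 * π := by positivity
  have hmem0 : (0:ℝ) ∈ Set.Icc (0:ℝ) (2*π) := by constructor <;> linarith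
  have hmem1 : (2*π) ∈ Set.Icc (0:ℝ) (2*π) := by constructor <;> linarith
  obtain ⟨k0, hk0⟩ := hint 0 hmem0
  obtain ⟨k1, hk1⟩ := hint (2*π) hmem1
  have hEq : d 0 = d (2*π) := by
    by_contra hne
    rcases lt_or_gt_of_ne hne with hlt | hlt
    · have hr : (k0:ℝ) < k1 := by rw [← hk0, ← hk1]; exact hlt
      have : k0 < k1 := by exact_mod_cast hr
      have hv : ((k0:ℝ) + 1/2) ∈ Set.Icc (d 0) (d (2*π)) := by
        rw [hk0, hk1]
        constructor
        · linarith
        · have : (k0:ℝ) + 1 ≤ k1 := by exact_mod_cast this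
          linarith
      obtain ⟨c, hcmem, hcv⟩ := intermediate_value_Icc h2π hdc hv
      obtain ⟨k, hk⟩ := hint c hcmem
      rw [hk] at hcv
      have : (2*k : ℝ) = 2*k0 + 1 := by linarith
      have : (2*k : ℤ) = 2*k0 + 1 := by exact_mod_cast this
      omega
    · have hr : (k1:ℝ) < k0 := by rw [← hk0, ← hk1]; exact hlt
      have : k1 < k0 := by exact_mod_cast hr
      have hv : ((k1:ℝ) + 1/2) ∈ Set.Icc (d (2*π)) (d 0) := by
        rw [hk0, hk1]
        constructor
        · linarith
        · have : (k1:ℝ) + 1 ≤ k0 := by exact_mod_cast this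
          linarith
      obtain ⟨c, hcmem, hcv⟩ := intermediate_value_Icc' h2π hdc hv
      obtain ⟨k, hk⟩ := hint c hcmem
      rw [hk] at hcv
      have : (2*k : ℝ) = 2*k1 + 1 := by linarith
      have : (2*k : ℤ) = 2*k1 + 1 := by exact_mod_cast this
      omega
  have hpi : (2:ℝ) * π ≠ 0 := by positivity
  have : θ (2*π) - φ (2*π) = θ 0 - φ 0 := by
    have h := hEq
    simp only [hdd] at h
    field_simp [pi_ne_zero] at h
    linarith
  have h2 : 2 * π * (n:ℝ) = 2 * π * (m:ℝ) := by
    rw [← hd, ← hd']; linarith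
  have : (n:ℝ) = m := mul_left_cancel₀ hpi h2
  exact_mod_cast this



lemma winding_linear {r : ℝ} (hr : 0 < r) {a : ℂ} (ha : ‖a‖ < r) :
    WindingNumberIs (fun ζ => (r : ℂ) * ζ - a) 1 := by
  have hr0 : (r : ℂ) ≠ 0 := by exact_mod_cast hr.ne'
  set w : ℝ → ℂ := fun t => a * Complex.exp (-(Complex.I * t)) / r with hw
  have habsw : ∀ t, ‖w t‖ < 1 := by
    intro t
    simp only [hw, norm_div, norm_mul, Complex.norm_exp]
    have : (-(Complex.I * (t:ℂ))).re = 0 := by simp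
    rw [this]
    simp only [Real.exp_zero, mul_one, Complex.norm_real, Real.norm_eq_abs, abs_of_pos hr]
    exact (div_lt_one hr).mpr ha
  have hrepos : ∀ t, 0 < (1 - w t).re := by
    intro t
    have h1 : (w t).re ≤ ‖w t‖ := Complex.re_le_norm _
    have := habsw t
    simp only [Complex.sub_re, Complex.one_re]
    linarith
  have hwc : Continuous w := by
    apply Continuous.div_const
    apply continuous_const.mul
    exact Complex.continuous_exp.comp (by continuity)
  have hargc : Continuous fun t => Complex.arg (1 - w t) := by
    rw [continuous_iff_continuousAt]
    intro t
    have h1 : ContinuousAt (fun z : ℂ => z.arg) (1 - w t) :=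
      Complex.continuousAt_arg (Complex.mem_slitPlane_iff.mpr (Or.inl (hrepos t)))
    have h2 : ContinuousAt (fun t => 1 - w t) t := (continuous_const.sub hwc).continuousAt
    have h3 := ContinuousAt.comp (f := fun t : ℝ => 1 - w t) (x := t) h1 h2
    exact h3
  set θ : ℝ → ℝ := fun t => t + Complex.arg (1 - w t) with hθ
  have key : ∀ t : ℝ, (r : ℂ) * Complex.exp (Complex.I * t) - a
      = (r : ℂ) * Complex.exp (Complex.I * t) * (1 - w t) := by
    intro t
    have hee : Complex.exp (Complex.I * t) * Complex.exp (-(Complex.I * t)) = 1 := by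
      rw [← Complex.exp_add]; simp
    have hmain : (r:ℂ) * Complex.exp (Complex.I*t) * (1 - w t)
        = (r:ℂ) * Complex.exp (Complex.I*t)
          - a * (Complex.exp (Complex.I*t) * Complex.exp (-(Complex.I*t))) := by
      simp only [hw]
      field_simp
    rw [hmain, hee, mul_one]
  refine ⟨θ, (continuous_id.add hargc).continuousOn, fun t ht => ?_, ?_⟩
  · show (r : ℂ) * Complex.exp (Complex.I * t) - a
      = (‖(r:ℂ) * Complex.exp (Complex.I * t) - a‖ : ℂ)
        * Complex.exp (Complex.I * θ t)
    rw [key t]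
    have habs : ‖(r:ℂ) * Complex.exp (Complex.I * t) * (1 - w t)‖
        = r * ‖1 - w t‖ := by
      simp [map_mul, Complex.norm_exp, abs_of_pos hr]
    rw [habs, hθ]
    push_cast
    rw [mul_add, Complex.exp_add]
    have harg : (‖1 - w t‖ : ℂ) * Complex.exp (Complex.I * (Complex.arg (1 - w t)))
        = 1 - w t := by
      rw [mul_comm Complex.I]
      exact Complex.norm_mul_exp_arg_mul_I _
    calc (r:ℂ) * Complex.exp (Complex.I * t) * (1 - w t)
        = (r:ℂ) * Complex.exp (Complex.I * t) *
          ((‖1 - w t‖ : ℂ) * Complex.exp (Complex.I * (Complex.arg (1 - w t)))) := by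
          rw [harg]
      _ = _ := by ring
  · have hw2π : w (2 * π) = w 0 := by
      simp only [hw]
      congr 1
      congr 1
      rw [show (-(Complex.I * ((2:ℝ)*π : ℝ))) = (-1 : ℤ) * (2 * π * Complex.I) by push_cast; ring,
        Complex.exp_int_mul_two_pi_mul_I]
      simp
    simp only [hθ, hw2π]
    push_cast
    ring



lemma winding_zero_core {f : ℂ → ℂ} (hf : DifferentiableOn ℂ f (Metric.ball 0 1))
    (hne : ∀ z ∈ Metric.ball (0:ℂ) 1, f z ≠ 0) {r : ℝ} (hr : r ∈ Set.Ioo (0:ℝ) 1) :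
    WindingNumberIs (fun ζ => f ((r : ℂ) * ζ)) 0 := by
  have hball : ∀ t : ℝ, circleMap 0 r t ∈ ball (0:ℂ) 1 := by
    intro t
    simp only [mem_ball_zero_iff, norm_circleMap_zero, abs_of_pos hr.1]
    exact hr.2
  have hsub : closedBall (0:ℂ) r ⊆ ball 0 1 := closedBall_subset_ball hr.2
  have hA : AnalyticOnNhd ℂ f (ball 0 1) := hf.analyticOnNhd isOpen_ball
  have hd : DifferentiableOn ℂ (deriv f) (ball (0:ℂ) 1) := hA.deriv.differentiableOn
  set g : ℂ → ℂ := fun z => deriv f z / f z with hgdef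
  have hg : DifferentiableOn ℂ g (ball (0:ℂ) 1) := hd.div hf hne
  have hint0 : (∮ z in C(0, r), g z) = 0 := by
    apply Complex.circleIntegral_eq_zero_of_differentiable_on_off_countable hr.1.le
      Set.countable_empty (hg.continuousOn.mono hsub)
    intro z hz
    have hz1 : z ∈ ball (0:ℂ) 1 := ball_subset_ball hr.2.le hz.1
    exact (hg z hz1).differentiableAt (isOpen_ball.mem_nhds hz1)
  set ψ : ℝ → ℂ := fun s => circleMap 0 r s * Complex.I * g (circleMap 0 r s) with hψdef
  have hgc : Continuous fun s : ℝ => g (circleMap 0 r s) := by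
    have := hg.continuousOn.comp_continuous (continuous_circleMap 0 r) hball
    exact this
  have hψc : Continuous ψ := ((continuous_circleMap 0 r).mul continuous_const).mul hgc
  have hio : (∮ z in C(0, r), g z) = ∫ s in (0:ℝ)..(2*π), ψ s := by
    simp only [circleIntegral, deriv_circleMap, smul_eq_mul, hψdef]
  set L : ℝ → ℂ := fun t => Complex.log (f (circleMap 0 r 0)) + ∫ s in (0:ℝ)..t, ψ s with hLdef
  have hL : ∀ t, HasDerivAt L (ψ t) t := by
    intro t
    exact (HasDerivAt.const_add _ ((hψc.integral_hasStrictDerivAt 0 t).hasDerivAt))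
  have hLc : Continuous L := by
    have : Differentiable ℝ L := fun t => (hL t).differentiableAt
    exact this.continuous
  set E : ℝ → ℂ := fun t => f (circleMap 0 r t) * Complex.exp (-L t) with hEdef
  have hfγ : ∀ t : ℝ, HasDerivAt (fun s : ℝ => f (circleMap 0 r s))
      (deriv f (circleMap 0 r t) * (circleMap 0 r t * Complex.I)) t := by
    intro t
    have h1 : HasDerivAt f (deriv f (circleMap 0 r t)) (circleMap 0 r t) :=
      (hf.differentiableAt (isOpen_ball.mem_nhds (hball t))).hasDerivAt
    exact h1.comp t (hasDerivAt_circleMap 0 r t)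
  have hE : ∀ t : ℝ, HasDerivAt E 0 t := by
    intro t
    have h2 : HasDerivAt (fun s : ℝ => Complex.exp (-L s))
        (Complex.exp (-L t) * (-ψ t)) t := ((hL t).neg).cexp
    have h3 := (hfγ t).mul h2
    have hzero : deriv f (circleMap 0 r t) * (circleMap 0 r t * Complex.I) *
        Complex.exp (-L t) + f (circleMap 0 r t) * (Complex.exp (-L t) * (-ψ t)) = 0 := by
      simp only [hψdef, hgdef]
      field_simp [hne _ (hball t)]
      ring
    rw [hzero] at h3
    exact h3
  have hconst : ∀ t : ℝ, E t = E 0 := fun t =>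
    is_const_of_deriv_eq_zero (fun s => (hE s).differentiableAt) (fun s => (hE s).deriv) t 0
  have hE0 : E 0 = 1 := by
    simp only [hEdef, hLdef, intervalIntegral.integral_same, add_zero, Complex.exp_neg,
      Complex.exp_log (hne _ (hball 0))]
    exact mul_inv_cancel₀ (hne _ (hball 0))
  have hflog : ∀ t : ℝ, f (circleMap 0 r t) = Complex.exp (L t) := by
    intro t
    have h4 := hconst t
    rw [hE0] at h4
    simp only [hEdef, Complex.exp_neg] at h4
    rwa [mul_inv_eq_one₀ (Complex.exp_ne_zero _)] at h4
  have hcm : ∀ t : ℝ, (r : ℂ) * Complex.exp (Complex.I * t) = circleMap 0 r t := by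
    intro t
    simp [circleMap, mul_comm]
  refine ⟨fun t => (L t).im, (Complex.continuous_im.comp hLc).continuousOn, fun t ht => ?_, ?_⟩
  · show f ((r:ℂ) * Complex.exp (Complex.I * t))
      = (‖f ((r:ℂ) * Complex.exp (Complex.I * t))‖ : ℂ)
        * Complex.exp (Complex.I * ((L t).im : ℝ))
    rw [hcm t, hflog t, Complex.norm_exp, Complex.ofReal_exp, ← Complex.exp_add]
    congr 1
    rw [mul_comm Complex.I]
    exact (Complex.re_add_im (L t)).symm
  · have h5 : L (2*π) - L 0 = ∫ s in (0:ℝ)..(2*π), ψ s := by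
      simp [hLdef, intervalIntegral.integral_same]
    have h6 : L (2*π) - L 0 = 0 := by rw [h5, ← hio, hint0]
    have h7 : (L (2*π)).im - (L 0).im = 0 := by
      rw [← Complex.sub_im, h6]; simp
    simp [h7]

-- factorization + finiteness + induction (tested with defs from w1/w3)

lemma not_eventually_zero {f : ℂ → ℂ} (hf : DifferentiableOn ℂ f (Metric.ball 0 1))
    {z₀ : ℂ} (hz₀ : z₀ ∈ Metric.ball (0:ℂ) 1)
    (hnottriv : ∃ z ∈ Metric.ball (0:ℂ) 1, f z ≠ 0) :
    ¬ (∀ᶠ z in nhds z₀, f z = 0) := by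
  intro h
  have hA : AnalyticOnNhd ℂ f (Metric.ball 0 1) := hf.analyticOnNhd Metric.isOpen_ball
  have := hA.eqOn_zero_of_preconnected_of_eventuallyEq_zero
    (convex_ball (0:ℂ) 1).isPreconnected hz₀ h
  obtain ⟨z, hz, hzne⟩ := hnottriv
  exact hzne (this hz)

lemma exists_factorization {f : ℂ → ℂ} (hf : DifferentiableOn ℂ f (Metric.ball 0 1))
    {z₀ : ℂ} (hz₀ : z₀ ∈ Metric.ball (0:ℂ) 1) (hfz₀ : f z₀ = 0)
    (hnottriv : ∃ z ∈ Metric.ball (0:ℂ) 1, f z ≠ 0) :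
    ∃ (k : ℕ) (G : ℂ → ℂ), 1 ≤ k ∧ DifferentiableOn ℂ G (Metric.ball 0 1) ∧ G z₀ ≠ 0 ∧
      (∀ w : ℂ, f w = (w - z₀) ^ k * G w) ∧
      (∀ w : ℂ, w ≠ z₀ → G w = f w / (w - z₀) ^ k) := by
  have hA : AnalyticOnNhd ℂ f (Metric.ball 0 1) := hf.analyticOnNhd Metric.isOpen_ball
  have hAz : AnalyticAt ℂ f z₀ := hA z₀ hz₀
  have horder_ne_top : analyticOrderAt f z₀ ≠ ⊤ := by
    intro h
    rw [analyticOrderAt_eq_top] at h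
    exact not_eventually_zero hf hz₀ hnottriv h
  set k : ℕ := (analyticOrderAt f z₀).toNat with hk
  have horder : analyticOrderAt f z₀ = k := (ENat.natCast_toNat horder_ne_top).symm
  obtain ⟨g, hg_an, hg_ne, hg_eq⟩ := (hAz.analyticOrderAt_eq_natCast (n := k)).mp horder
  have hk1 : 1 ≤ k := by
    rcases Nat.eq_zero_or_pos k with h0 | h1
    · exfalso
      have := hg_eq.self_of_nhds
      rw [h0] at this
      simp [hfz₀] at this
      exact hg_ne this.symm
    · exact h1
  set G : ℂ → ℂ := fun w => if w = z₀ then g z₀ else f w / (w - z₀) ^ k with hG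
  have hGnear : G =ᶠ[nhds z₀] g := by
    filter_upwards [hg_eq] with w hw
    by_cases hwz : w = z₀
    · simp [hG, hwz]
    · have hpow : (w - z₀) ^ k ≠ 0 := pow_ne_zero _ (sub_ne_zero.mpr hwz)
      simp only [hG, if_neg hwz, hw, smul_eq_mul]
      field_simp
  refine ⟨k, G, hk1, ?_, ?_, ?_, fun w hw => by simp [hG, hw]⟩
  · intro w hw
    by_cases hwz : w = z₀
    · subst hwz
      exact (hg_an.differentiableAt.congr_of_eventuallyEq hGnear).differentiableWithinAt
    · have hev : G =ᶠ[nhds w] fun w' => f w' / (w' - z₀) ^ k := by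
        filter_upwards [eventually_ne_nhds hwz] with w' hw'
        simp [hG, if_neg hw']
      have hdiv : DifferentiableAt ℂ (fun w' => f w' / (w' - z₀) ^ k) w := by
        apply DifferentiableAt.div
        · exact hf.differentiableAt (Metric.isOpen_ball.mem_nhds hw)
        · exact ((differentiableAt_id.sub_const z₀).pow k)
        · exact pow_ne_zero _ (sub_ne_zero.mpr hwz)
      exact (hdiv.congr_of_eventuallyEq hev).differentiableWithinAt
  · simp only [hG, if_pos rfl]
    exact hg_ne
  · intro w
    by_cases hwz : w = z₀
    · subst hwz
      simp [hfz₀, zero_pow (by omega : k ≠ 0)]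
    · have hpow : (w - z₀) ^ k ≠ 0 := pow_ne_zero _ (sub_ne_zero.mpr hwz)
      simp only [hG, if_neg hwz]
      field_simp

lemma zeroset_finite {f : ℂ → ℂ} (hf : DifferentiableOn ℂ f (Metric.ball 0 1))
    {ρ : ℝ} (hρ1 : ρ < 1)
    (hnottriv : ∃ z ∈ Metric.ball (0:ℂ) 1, f z ≠ 0) :
    {z ∈ Metric.closedBall (0:ℂ) ρ | f z = 0}.Finite := by
  set Z := {z ∈ Metric.closedBall (0:ℂ) ρ | f z = 0} with hZ
  have hsub : Metric.closedBall (0:ℂ) ρ ⊆ Metric.ball 0 1 := Metric.closedBall_subset_ball hρ1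
  have key : ∀ z : ℂ, ∃ U ∈ nhds z, ∀ w ∈ U, w ∈ Z → w = z := by
    intro z
    by_cases hzb : z ∈ Metric.closedBall (0:ℂ) ρ
    · by_cases hfz : f z = 0
      · have hAz : AnalyticAt ℂ f z := (hf.analyticOnNhd Metric.isOpen_ball) z (hsub hzb)
        rcases hAz.eventually_eq_zero_or_eventually_ne_zero with h | h
        · exact absurd h (not_eventually_zero hf (hsub hzb) hnottriv)
        · rw [eventually_nhdsWithin_iff] at h
          refine ⟨{w | w ∈ ({z}ᶜ : Set ℂ) → f w ≠ 0}, h, ?_⟩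
          intro w hw hwZ
          by_contra hne
          exact (hw hne) hwZ.2
      · have h := (hf.continuousOn.continuousAt
          (Metric.isOpen_ball.mem_nhds (hsub hzb))).eventually_ne hfz
        refine ⟨{w | f w ≠ 0}, h, ?_⟩
        intro w hw hwZ
        exact absurd hwZ.2 hw
    · refine ⟨(Metric.closedBall (0:ℂ) ρ)ᶜ,
        (Metric.isClosed_closedBall.isOpen_compl).mem_nhds hzb, ?_⟩
      intro w hw hwZ
      exact absurd hwZ.1 hw
  choose U hU hUspec using key
  obtain ⟨T, hTmem, hTcover⟩ := (isCompact_closedBall (0:ℂ) ρ).elim_nhds_subcover U (fun x _ => hU x)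
  apply Set.Finite.subset T.finite_toSet
  intro z hz
  have hz' : z ∈ Metric.closedBall (0:ℂ) ρ := hz.1
  obtain ⟨x, hxT, hxU⟩ := Set.mem_iUnion₂.mp (hTcover hz')
  have := hUspec x z hxU hz
  rw [this]
  exact hxT

lemma winding_ge {ρ : ℝ} (hρ : ρ ∈ Set.Ioo (0:ℝ) 1) {r : ℝ} (hr : r ∈ Set.Ioo ρ 1) :
    ∀ N : ℕ, ∀ f : ℂ → ℂ, DifferentiableOn ℂ f (Metric.ball 0 1) →
    (∀ z ∈ annulus ρ, f z ≠ 0) →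
    {z ∈ Metric.closedBall (0:ℂ) ρ | f z = 0}.Finite →
    {z ∈ Metric.closedBall (0:ℂ) ρ | f z = 0}.ncard = N →
    ∃ n : ℕ, N ≤ n ∧ WindingNumberIs (fun ζ => f ((r:ℂ) * ζ)) n := by
  have hrIoo : r ∈ Set.Ioo (0:ℝ) 1 := ⟨hρ.1.trans hr.1, hr.2⟩
  have hmid : ((r:ℝ) : ℂ) ∈ annulus ρ := by
    constructor <;> simp [Complex.norm_real, Real.norm_eq_abs, abs_of_pos hrIoo.1, hr.1, hr.2]
  have hannball : ∀ z ∈ annulus ρ, z ∈ Metric.ball (0:ℂ) 1 := by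
    intro z hz
    simp only [Metric.mem_ball, dist_zero_right]
    exact hz.2
  intro N
  induction N with
  | zero =>
      intro f hf hann hfin hncard
      have hZempty : {z ∈ Metric.closedBall (0:ℂ) ρ | f z = 0} = ∅ :=
        (Set.ncard_eq_zero hfin).mp hncard
      have hne : ∀ z ∈ Metric.ball (0:ℂ) 1, f z ≠ 0 := by
        intro z hz
        rcases le_or_gt (‖z‖) ρ with h | h
        · intro hfz
          have : z ∈ ({z ∈ Metric.closedBall (0:ℂ) ρ | f z = 0}) :=
            ⟨by simpa [Metric.mem_closedBall, dist_zero_right] using h, hfz⟩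
          rw [hZempty] at this
          exact this
        · exact hann z ⟨h, by simpa [Metric.mem_ball, dist_zero_right] using hz⟩
      exact ⟨0, le_refl 0, winding_zero_core hf hne hrIoo⟩
  | succ N ih =>
      intro f hf hann hfin hncard
      have hnottriv : ∃ z ∈ Metric.ball (0:ℂ) 1, f z ≠ 0 :=
        ⟨((r:ℝ) : ℂ), hannball _ hmid, hann _ hmid⟩
      have hZne : {z ∈ Metric.closedBall (0:ℂ) ρ | f z = 0}.Nonempty := by
        apply Set.nonempty_of_ncard_ne_zero
        rw [hncard]; omega
      obtain ⟨z₀, hz₀cb, hz₀f⟩ := hZne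
      have hz₀ball : z₀ ∈ Metric.ball (0:ℂ) 1 := Metric.closedBall_subset_ball hρ.2 hz₀cb
      have hz₀abs : ‖z₀‖ ≤ ρ := by
        simpa [Metric.mem_closedBall, dist_zero_right] using hz₀cb
      obtain ⟨k, G, hk1, hGdiff, hGz₀, hfeq, hGval⟩ :=
        exists_factorization hf hz₀ball hz₀f hnottriv
      have hGann : ∀ z ∈ annulus ρ, G z ≠ 0 := by
        intro z hz
        have hzne : z ≠ z₀ := by
          intro h
          rw [h] at hz
          exact absurd hz.1 (not_lt.mpr hz₀abs)
        rw [hGval z hzne]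
        exact div_ne_zero (hann z hz) (pow_ne_zero _ (sub_ne_zero.mpr hzne))
      have hZG : {z ∈ Metric.closedBall (0:ℂ) ρ | G z = 0}
          = {z ∈ Metric.closedBall (0:ℂ) ρ | f z = 0} \ {z₀} := by
        ext w
        simp only [Set.mem_setOf_eq, Set.mem_diff, Set.mem_singleton_iff]
        constructor
        · rintro ⟨hwcb, hwG⟩
          have hwz : w ≠ z₀ := fun h => hGz₀ (h ▸ hwG)
          refine ⟨⟨hwcb, ?_⟩, hwz⟩
          rw [hfeq w, hwG, mul_zero]
        · rintro ⟨⟨hwcb, hwf⟩, hwz⟩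
          refine ⟨hwcb, ?_⟩
          rw [hGval w hwz, hwf, zero_div]
      have hfinG : {z ∈ Metric.closedBall (0:ℂ) ρ | G z = 0}.Finite := by
        rw [hZG]; exact hfin.sdiff
      have hncardG : {z ∈ Metric.closedBall (0:ℂ) ρ | G z = 0}.ncard = N := by
        have hmemz : z₀ ∈ {z | z ∈ Metric.closedBall (0:ℂ) ρ ∧ f z = 0} := ⟨hz₀cb, hz₀f⟩
        rw [hZG, Set.ncard_sdiff_singleton_of_mem hmemz, hncard]
        omega
      obtain ⟨m, hm, hWm⟩ := ih G hGdiff hGann hfinG hncardG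
      have hz₀r : ‖z₀‖ < r := lt_of_le_of_lt hz₀abs hr.1
      have hWlin : WindingNumberIs (fun ζ => ((r:ℂ) * ζ - z₀) ^ k) ((k : ℤ) * 1) :=
        winding_pow (winding_linear hrIoo.1 hz₀r) k
      have hWmul := winding_mul hWlin hWm
      refine ⟨k + m, by omega, ?_⟩
      have hcast : ((k + m : ℕ) : ℤ) = (k : ℤ) * 1 + (m : ℤ) := by push_cast; ring
      rw [hcast]
      apply winding_congr (F := fun ζ => ((r:ℂ) * ζ - z₀) ^ k * G ((r:ℂ) * ζ)) ?_ hWmul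
      intro z hz
      exact (hfeq ((r:ℂ) * z)).symm

/-- Nyquist criterion for `H^∞`: let `ρ ∈ (0,1)` and let `f` be bounded and holomorphic
on the unit disk whose restriction to the annulus `A_ρ` is invertible in `C_b(A_ρ)`
(i.e. `inf_{ρ<|z|<1} |f z| > 0`). Then `f` is invertible in `H^∞` if and only if for
every `r ∈ (ρ,1)` the loop `ζ ↦ f(rζ)` has winding number `0` about the origin. -/
theorem nyquist_criterion_Hinfty (ρ : ℝ) (hρ : ρ ∈ Set.Ioo (0 : ℝ) 1)
    (f : ℂ → ℂ) (hf : DifferentiableOn ℂ f (Metric.ball 0 1))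
    (hb : ∃ M : ℝ, ∀ z ∈ Metric.ball (0 : ℂ) 1, ‖f z‖ ≤ M)
    (hinv : ∃ m > (0 : ℝ), ∀ z ∈ annulus ρ, m ≤ ‖f z‖) :
    (∃ g : ℂ → ℂ, DifferentiableOn ℂ g (Metric.ball 0 1) ∧
      (∃ M : ℝ, ∀ z ∈ Metric.ball (0 : ℂ) 1, ‖g z‖ ≤ M) ∧
      ∀ z ∈ Metric.ball (0 : ℂ) 1, f z * g z = 1) ↔
    (∀ r ∈ Set.Ioo ρ 1, WindingNumberIs (fun ζ => f ((r : ℂ) * ζ)) 0) := by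
  obtain ⟨m, hm0, hmlow⟩ := hinv
  have hann : ∀ z ∈ annulus ρ, f z ≠ 0 := by
    intro z hz hfz
    have := hmlow z hz
    rw [hfz] at this
    simp at this
    linarith
  constructor
  · rintro ⟨g, hg, hgb, hfg⟩ r hr
    have hne : ∀ z ∈ Metric.ball (0:ℂ) 1, f z ≠ 0 := fun z hz =>
      left_ne_zero_of_mul_eq_one (hfg z hz)
    exact winding_zero_core hf hne ⟨hρ.1.trans hr.1, hr.2⟩
  · intro hW
    set r : ℝ := (ρ + 1) / 2 with hrdef
    have hr : r ∈ Set.Ioo ρ 1 := by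
      rw [Set.mem_Ioo, hrdef]
      constructor <;> linarith [hρ.1, hρ.2]
    have hrIoo : r ∈ Set.Ioo (0:ℝ) 1 := ⟨hρ.1.trans hr.1, hr.2⟩
    have hmid : ((r:ℝ) : ℂ) ∈ annulus ρ := by
      constructor <;> simp [Complex.norm_real, Real.norm_eq_abs, abs_of_pos hrIoo.1, hr.1, hr.2]
    have hmidball : ((r:ℝ) : ℂ) ∈ Metric.ball (0:ℂ) 1 := by
      simp only [Metric.mem_ball, dist_zero_right]
      rw [Complex.norm_real, Real.norm_eq_abs, abs_of_pos hrIoo.1]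
      exact hr.2
    have hnottriv : ∃ z ∈ Metric.ball (0:ℂ) 1, f z ≠ 0 :=
      ⟨((r:ℝ) : ℂ), hmidball, hann _ hmid⟩
    have hfin := zeroset_finite hf hρ.2 hnottriv
    obtain ⟨n, hNn, hWn⟩ := winding_ge hρ hr _ f hf hann hfin rfl
    have hcirc : ∀ t ∈ Set.Icc (0:ℝ) (2 * Real.pi),
        (fun ζ => f ((r:ℂ) * ζ)) (Complex.exp (Complex.I * t)) ≠ 0 := by
      intro t ht
      apply hann
      constructor <;>
        simp [map_mul, Complex.norm_exp, Complex.norm_real, Real.norm_eq_abs, abs_of_pos hrIoo.1, hr.1, hr.2]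
    have hn0 : (n : ℤ) = 0 := winding_unique hcirc hWn (hW r hr)
    have hn0' : n = 0 := by exact_mod_cast hn0
    have hN0 : {z ∈ Metric.closedBall (0:ℂ) ρ | f z = 0}.ncard = 0 := by omega
    have hZempty : {z ∈ Metric.closedBall (0:ℂ) ρ | f z = 0} = ∅ :=
      (Set.ncard_eq_zero hfin).mp hN0
    have hne : ∀ z ∈ Metric.ball (0:ℂ) 1, f z ≠ 0 := by
      intro z hz
      rcases le_or_gt (‖z‖) ρ with h | h
      · intro hfz
        have hmem : z ∈ ({z ∈ Metric.closedBall (0:ℂ) ρ | f z = 0}) :=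
          ⟨by simpa [Metric.mem_closedBall, dist_zero_right] using h, hfz⟩
        rw [hZempty] at hmem
        exact hmem
      · exact hann z ⟨h, by simpa [Metric.mem_ball, dist_zero_right] using hz⟩
    -- lower bound for |f| on the ball
    have hsub : Metric.closedBall (0:ℂ) r ⊆ Metric.ball 0 1 := Metric.closedBall_subset_ball hr.2
    have hfc : ContinuousOn (fun z => ‖f z‖) (Metric.closedBall (0:ℂ) r) :=
      continuous_norm.comp_continuousOn (hf.continuousOn.mono hsub)
    obtain ⟨w₀, hw₀mem, hw₀min⟩ := (isCompact_closedBall (0:ℂ) r).exists_isMinOn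
      ⟨0, Metric.mem_closedBall_self hrIoo.1.le⟩ hfc
    have hw₀pos : 0 < ‖f w₀‖ := by
      rw [norm_pos_iff]
      exact hne w₀ (hsub hw₀mem)
    set c : ℝ := min m (‖f w₀‖) with hcdef
    have hcpos : 0 < c := lt_min hm0 hw₀pos
    have hlow : ∀ z ∈ Metric.ball (0:ℂ) 1, c ≤ ‖f z‖ := by
      intro z hz
      rcases le_or_gt (‖z‖) r with h | h
      · refine le_trans (min_le_right _ _) (hw₀min ?_)
        simpa [Metric.mem_closedBall, dist_zero_right] using h
      · refine le_trans (min_le_left _ _) (hmlow z ⟨hr.1.trans h, ?_⟩)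
        simpa [Metric.mem_ball, dist_zero_right] using hz
    refine ⟨fun z => (f z)⁻¹, hf.inv hne, ⟨c⁻¹, ?_⟩, fun z hz => mul_inv_cancel₀ (hne z hz)⟩
    intro z hz
    rw [norm_inv]
    exact inv_anti₀ hcpos (hlow z hz)
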